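/- arXiv:1305.6540 — 3 statements merged into one kernel-verified Lean document; each statement's English description precedes it below -/
import Mathlib

section
/- (Power diagrams give optimal transport cost.) Let Ω ⊂ ℝ^d be bounded measurable with positive density ρ ∈ L¹(Ω), and let {P_i}_{i=1}^M be the p-power diagram in Ω generated by distinct points x_i ∈ Ω and weights w_i ∈ ℝ. Set m_i = ∫_{P_i} ρ dx and ν = Σ_i m_i δ_{x_i}. Then W_p(ρ dx, ν) = Σ_i ∫_{P_i} |x - x_i|^p ρ(x) dx, i.e., the partition {P_i} is an optimal transport partition. -/
open MeasureTheory
open scoped ENNReal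


private lemma phi_strictMono {p r : ℝ} (hp : 1 ≤ p) (hr : 0 < r) :
    StrictMono (fun s : ℝ => s * (r ^ 2 + s ^ 2) ^ (p / 2 - 1)) := by
  apply strictMono_of_deriv_pos
  intro s
  have hpos : (0:ℝ) < r ^ 2 + s ^ 2 := by positivity
  have h1 : HasDerivAt (fun s : ℝ => r ^ 2 + s ^ 2) (2 * s) s := by
    simpa using (hasDerivAt_pow 2 s).const_add (r ^ 2)
  have h2 := h1.rpow_const (p := p / 2 - 1) (Or.inl hpos.ne')
  have h3 : HasDerivAt (fun s : ℝ => s * (r ^ 2 + s ^ 2) ^ (p / 2 - 1))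
      (1 * (r ^ 2 + s ^ 2) ^ (p / 2 - 1)
        + s * (2 * s * (p / 2 - 1) * (r ^ 2 + s ^ 2) ^ (p / 2 - 1 - 1))) s :=
    (hasDerivAt_id s).mul h2
  rw [h3.deriv]
  have e1 : (r ^ 2 + s ^ 2) ^ (p / 2 - 1) = (r ^ 2 + s ^ 2) ^ (p / 2 - 1 - 1) * (r ^ 2 + s ^ 2) := by
    rw [← Real.rpow_add_one hpos.ne']; ring_nf
  have hB : (0:ℝ) < (r ^ 2 + s ^ 2) ^ (p / 2 - 1 - 1) := Real.rpow_pos_of_pos hpos _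
  have key : 1 * (r ^ 2 + s ^ 2) ^ (p / 2 - 1)
        + s * (2 * s * (p / 2 - 1) * (r ^ 2 + s ^ 2) ^ (p / 2 - 1 - 1))
      = (r ^ 2 + s ^ 2) ^ (p / 2 - 1 - 1) * (r ^ 2 + (p - 1) * s ^ 2) := by
    rw [e1]; ring
  rw [key]
  have h4 : (0:ℝ) < r ^ 2 + (p - 1) * s ^ 2 := by nlinarith [sq_nonneg s, sq_nonneg r]
  positivity

private lemma F_strictMono {p r L α : ℝ} (hp : 1 ≤ p) (hr : 0 < r) (hL : 0 < L) :
    StrictMono (fun t : ℝ =>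
      ((t - α) ^ 2 + r ^ 2) ^ (p / 2) - ((t - (α + L)) ^ 2 + r ^ 2) ^ (p / 2)) := by
  apply strictMono_of_deriv_pos
  intro t
  have d1 : ∀ β : ℝ, HasDerivAt (fun t : ℝ => ((t - β) ^ 2 + r ^ 2) ^ (p / 2))
      (p * ((t - β) * (r ^ 2 + (t - β) ^ 2) ^ (p / 2 - 1))) t := by
    intro β
    have hpos : (0:ℝ) < (t - β) ^ 2 + r ^ 2 := by positivity
    have h0 : HasDerivAt (fun t : ℝ => t - β) 1 t := (hasDerivAt_id t).sub_const β
    have h1 : HasDerivAt (fun t : ℝ => (t - β) ^ 2 + r ^ 2) (2 * (t - β)) t := by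
      simpa using (h0.pow 2).add_const (r ^ 2)
    have h2 := h1.rpow_const (p := p / 2) (Or.inl hpos.ne')
    convert h2 using 1
    rw [add_comm (r ^ 2)]
    ring
  have h : HasDerivAt (fun t : ℝ =>
      ((t - α) ^ 2 + r ^ 2) ^ (p / 2) - ((t - (α + L)) ^ 2 + r ^ 2) ^ (p / 2)) _ t :=
    (d1 α).sub (d1 (α + L))
  rw [h.deriv]
  have hφ := phi_strictMono (p := p) hp hr (a := t - (α + L)) (b := t - α) (by linarith)
  simp only at hφ
  nlinarith [hφ]

private lemma null_level {n : ℕ} (p : ℝ) (hp : 1 ≤ p)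
    (a b : EuclideanSpace ℝ (Fin (n + 2))) (hab : a ≠ b) (c : ℝ) :
    volume {y : EuclideanSpace ℝ (Fin (n + 2)) | ‖y - a‖ ^ p - ‖y - b‖ ^ p = c} = 0 := by
  classical
  have hL : 0 < ‖b - a‖ := norm_sub_pos_iff.mpr (Ne.symm hab)
  set L := ‖b - a‖ with hLdef
  set u : EuclideanSpace ℝ (Fin (n + 2)) := L⁻¹ • (b - a) with hudef
  have hu : ‖u‖ = 1 := by
    rw [hudef, norm_smul, norm_inv, norm_norm]
    field_simp
    exact div_self hL.ne'
  -- orthonormal basis with B 0 = u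
  have hcard : Module.finrank ℝ (EuclideanSpace ℝ (Fin (n + 2))) = Fintype.card (Fin (n + 2)) := by
    simp [finrank_euclideanSpace_fin]
  have horth : Orthonormal ℝ (Set.restrict {(0 : Fin (n + 2))} (fun _ => u)) := by
    rw [orthonormal_iff_ite]
    rintro ⟨i, hi⟩ ⟨j, hj⟩
    show inner ℝ u u = _
    have : i = j := by
      simp only [Set.mem_singleton_iff] at hi hj; rw [hi, hj]
    subst this
    rw [if_pos rfl, real_inner_self_eq_norm_sq, hu]
    norm_num
  obtain ⟨B, hB0⟩ := horth.exists_orthonormalBasis_extension_of_card_eq hcard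
  have hB0 : B 0 = u := hB0 0 rfl
  -- the measurable equivalence to (Fin (n+1) → ℝ) × ℝ
  let e1 := B.measurableEquiv
  let e2 := (MeasurableEquiv.toLp 2 (Fin (n + 2) → ℝ)).symm
  let e3 := MeasurableEquiv.piFinSuccAbove (fun _ : Fin (n + 2) => ℝ) 0
  let e4 : ℝ × (Fin (n + 1) → ℝ) ≃ᵐ (Fin (n + 1) → ℝ) × ℝ := MeasurableEquiv.prodComm
  let Φ : EuclideanSpace ℝ (Fin (n + 2)) ≃ᵐ (Fin (n + 1) → ℝ) × ℝ := ((e1.trans e2).trans e3).trans e4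
  have hΦ : MeasurePreserving Φ volume volume := by
    have h1 : MeasurePreserving e1 volume volume := B.measurePreserving_measurableEquiv
    have h2 : MeasurePreserving e2 volume volume :=
      EuclideanSpace.volume_preserving_symm_measurableEquiv_toLp _
    have h3 : MeasurePreserving e3 volume volume := by
      have := MeasureTheory.volume_preserving_piFinSuccAbove (fun _ : Fin (n + 2) => ℝ) 0
      rw [MeasureTheory.Measure.volume_eq_prod]
      exact this
    have h4 : MeasurePreserving e4 volume volume := by
      rw [MeasureTheory.Measure.volume_eq_prod, MeasureTheory.Measure.volume_eq_prod]
      exact MeasureTheory.Measure.measurePreserving_swap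
    exact h4.comp (h3.comp (h2.comp h1))
  set S := {y : EuclideanSpace ℝ (Fin (n + 2)) | ‖y - a‖ ^ p - ‖y - b‖ ^ p = c} with hSdef
  have hScl : IsClosed S := by
    apply isClosed_eq _ continuous_const
    have hc : ∀ (v : EuclideanSpace ℝ (Fin (n + 2))), Continuous fun y : EuclideanSpace ℝ (Fin (n + 2)) => ‖y - v‖ ^ p := fun v =>
      ((continuous_id.sub continuous_const).norm).rpow_const
        (fun y => Or.inr (by linarith))
    exact (hc a).sub (hc b)
  set T : Set ((Fin (n + 1) → ℝ) × ℝ) := Φ.symm ⁻¹' S with hTdef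
  have hTm : MeasurableSet T := Φ.symm.measurable hScl.measurableSet
  have hpre : S = Φ ⁻¹' T := by
    rw [hTdef, ← Set.preimage_comp]
    simp
  rw [hpre, hΦ.measure_preimage hTm.nullMeasurableSet]
  -- coordinates
  set α := (B.repr a) 0 with hα
  set A2 : Fin (n + 1) → ℝ := fun k => (B.repr a) (Fin.succAbove 0 k) with hA2
  set R : (Fin (n + 1) → ℝ) → ℝ := fun z => ∑ k, (z k - A2 k) ^ 2 with hR
  -- key formulas
  have repr_b : B.repr b = B.repr a + L • EuclideanSpace.single 0 1 := by
    have : b = a + L • u := by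
      rw [hudef, smul_smul, mul_inv_cancel₀ hL.ne', one_smul]; abel
    rw [this, map_add, _root_.map_smul, ← hB0, B.repr_self]
  have hxcoord : ∀ y : EuclideanSpace ℝ (Fin (n + 2)), (Φ y).2 = (B.repr y) 0 ∧
      ∀ k, (Φ y).1 k = (B.repr y) (Fin.succAbove 0 k) := fun y => ⟨rfl, fun k => rfl⟩
  have key : ∀ y v : EuclideanSpace ℝ (Fin (n + 2)), ‖y - v‖ ^ p
      = (∑ i, ((B.repr y) i - (B.repr v) i) ^ 2) ^ (p / 2) := by
    intro y v
    have hX : (0:ℝ) ≤ ∑ i, ((B.repr y) i - (B.repr v) i) ^ 2 := by positivity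
    have h1 : ‖y - v‖ = Real.sqrt (∑ i, ((B.repr y) i - (B.repr v) i) ^ 2) := by
      rw [← B.repr.norm_map (y - v), EuclideanSpace.norm_eq]
      congr 1
      refine Finset.sum_congr rfl fun i _ => ?_
      rw [map_sub]
      simp [Real.norm_eq_abs, sq_abs]
    rw [h1, Real.sqrt_eq_rpow, ← Real.rpow_mul hX]
    congr 1
    ring
  have hmemS : ∀ y : EuclideanSpace ℝ (Fin (n + 2)), y ∈ S ↔
      (((Φ y).2 - α) ^ 2 + R (Φ y).1) ^ (p / 2)
        - (((Φ y).2 - (α + L)) ^ 2 + R (Φ y).1) ^ (p / 2) = c := by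
    intro y
    have ha : ‖y - a‖ ^ p = (((Φ y).2 - α) ^ 2 + R (Φ y).1) ^ (p / 2) := by
      rw [key y a]
      congr 1
      rw [Fin.sum_univ_succAbove (fun i => ((B.repr y) i - (B.repr a) i) ^ 2) 0]
      rfl
    have hb : ‖y - b‖ ^ p = (((Φ y).2 - (α + L)) ^ 2 + R (Φ y).1) ^ (p / 2) := by
      rw [key y b]
      congr 1
      rw [Fin.sum_univ_succAbove (fun i => ((B.repr y) i - (B.repr b) i) ^ 2) 0]
      have h0 : B.repr b 0 = α + L := by
        rw [repr_b]
        simp [hα, PiLp.add_apply, PiLp.smul_apply, EuclideanSpace.single_apply]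
      have hsucc : ∀ k : Fin (n + 1), B.repr b (Fin.succAbove 0 k) = A2 k := by
        intro k
        have hne : (Fin.succAbove 0 k) ≠ 0 := Fin.succAbove_ne 0 k
        rw [repr_b]
        simp [hA2, PiLp.add_apply, PiLp.smul_apply, EuclideanSpace.single_apply, hne, Fin.succ_ne_zero]
      congr 1
      · rw [h0]; rfl
      · exact Finset.sum_congr rfl fun k _ => by rw [hsucc k]; rfl
    rw [hSdef]
    simp only [Set.mem_setOf_eq, ha, hb]
  have hmemT : ∀ z : Fin (n + 1) → ℝ, ∀ t : ℝ, (z, t) ∈ T ↔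
      ((t - α) ^ 2 + R z) ^ (p / 2) - ((t - (α + L)) ^ 2 + R z) ^ (p / 2) = c := by
    intro z t
    have : (z, t) ∈ T ↔ Φ.symm (z, t) ∈ S := Iff.rfl
    rw [this, hmemS (Φ.symm (z, t)), Φ.apply_symm_apply]
  -- bad set of z is null
  have hbad : volume {z : Fin (n + 1) → ℝ | R z = 0} = 0 := by
    have hset : {z : Fin (n + 1) → ℝ | R z = 0} = {A2} := by
      ext z
      simp only [Set.mem_setOf_eq, Set.mem_singleton_iff, hR]
      rw [Finset.sum_eq_zero_iff_of_nonneg (fun i _ => sq_nonneg _)]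
      constructor
      · intro h
        funext k
        have := h k (Finset.mem_univ k)
        have : z k - A2 k = 0 := by
          have := sq_eq_zero_iff.mp this
          exact this
        linarith
      · intro h k _
        rw [h]; ring
    rw [hset]
    have : ({A2} : Set (Fin (n + 1) → ℝ)) = Set.pi Set.univ (fun k => {A2 k}) := by
      ext g; simp [funext_iff, Set.mem_pi]
    rw [this, volume_pi_pi]
    exact Finset.prod_eq_zero (Finset.mem_univ 0) (by simp)
  -- conclude by Fubini
  rw [MeasureTheory.Measure.volume_eq_prod, Measure.measure_prod_null hTm]
  rw [Filter.EventuallyEq, ae_iff]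
  refine measure_mono_null (fun z hz => ?_) hbad
  simp only [Set.mem_setOf_eq] at hz ⊢
  by_contra hRz
  apply hz
  have hRpos : 0 < R z := lt_of_le_of_ne (by rw [hR]; positivity) (Ne.symm hRz)
  set r := Real.sqrt (R z) with hr
  have hr2 : r ^ 2 = R z := Real.sq_sqrt hRpos.le
  have hrpos : 0 < r := Real.sqrt_pos.mpr hRpos
  have hsec : Prod.mk z ⁻¹' T = {t : ℝ |
      ((t - α) ^ 2 + r ^ 2) ^ (p / 2) - ((t - (α + L)) ^ 2 + r ^ 2) ^ (p / 2) = c} := by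
    ext t
    rw [Set.mem_preimage, hmemT z t, hr2]
    rfl
  have hF := F_strictMono (α := α) hp hrpos hL
  have hsub : {t : ℝ |
      ((t - α) ^ 2 + r ^ 2) ^ (p / 2) - ((t - (α + L)) ^ 2 + r ^ 2) ^ (p / 2) = c}.Subsingleton :=
    fun s hs t ht => hF.injective (by
      simp only [Set.mem_setOf_eq] at hs ht
      show _ = _
      rw [hs, ht])
  rw [hsec]
  exact hsub.measure_zero volume

private lemma measure_map_finset_sum {α β : Type*} [MeasurableSpace α] [MeasurableSpace β]
    {ι : Type*} (s : Finset ι) (μ : ι → Measure α) {f : α → β} (hf : Measurable f) :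
    (∑ i ∈ s, μ i).map f = ∑ i ∈ s, (μ i).map f := by
  classical
  induction s using Finset.induction_on with
  | empty => simp
  | insert _ _ ha ih =>
    rw [Finset.sum_insert ha, Finset.sum_insert ha, Measure.map_add _ _ hf, ih]

private lemma continuous_finset_inf' {X ι : Type*} [TopologicalSpace X]
    {f : ι → X → ℝ} (hf : ∀ i, Continuous (f i)) {s : Finset ι} (hs : s.Nonempty) :
    Continuous fun y => s.inf' hs (fun i => f i y) := by
  classical
  induction hs using Finset.Nonempty.cons_induction with
  | singleton a => simpa using hf a
  | cons a s ha hs ih =>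
    have he : ∀ y, (Finset.cons a s ha).inf' (Finset.cons_nonempty ha) (fun i => f i y)
        = min (f a y) (s.inf' hs (fun i => f i y)) := fun y => Finset.inf'_cons hs _
    simp only [he]
    exact (hf a).min ih

/-- Power diagrams give the optimal transport cost.  If {P_i} is the
p-power diagram in Ω generated by distinct points x_i and weights w_i, and
ν = Σ_i m_i δ_{x_i} with m_i = ∫_{P_i} ρ dx, then the Kantorovich cost
W_p(ρ dx, ν) (infimum over couplings of ∫ |x-y|^p dγ) equals
Σ_i ∫_{P_i} |x - x_i|^p ρ(x) dx. -/
theorem power_diagram_is_optimal_transport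
    {d M : ℕ} (hd : 2 ≤ d) (hM : 0 < M) (p : ℝ) (hp : 1 ≤ p)
    (Ω : Set (EuclideanSpace ℝ (Fin d))) (hΩm : MeasurableSet Ω)
    (hΩb : Bornology.IsBounded Ω)
    (ρ : EuclideanSpace ℝ (Fin d) → ℝ)
    (hρi : IntegrableOn ρ Ω) (hρpos : ∀ x ∈ Ω, 0 < ρ x)
    (x : Fin M → EuclideanSpace ℝ (Fin d)) (hx : Function.Injective x)
    (hxΩ : ∀ i, x i ∈ Ω) (w : Fin M → ℝ)
    (P : Fin M → Set (EuclideanSpace ℝ (Fin d)))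
    (hP : ∀ i, P i = {y ∈ Ω | ∀ j, ‖y - x i‖ ^ p - w i ≤ ‖y - x j‖ ^ p - w j})
    (μ : Measure (EuclideanSpace ℝ (Fin d)))
    (hμ : μ = (volume.restrict Ω).withDensity (fun y => ENNReal.ofReal (ρ y)))
    (ν : Measure (EuclideanSpace ℝ (Fin d)))
    (hν : ν = ∑ i, (ENNReal.ofReal (∫ y in P i, ρ y)) • Measure.dirac (x i)) :
    sInf {c : ℝ | ∃ γ : Measure (EuclideanSpace ℝ (Fin d) × EuclideanSpace ℝ (Fin d)),
        γ.map Prod.fst = μ ∧ γ.map Prod.snd = ν ∧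
        c = ∫ z, ‖z.1 - z.2‖ ^ p ∂γ}
      = ∑ i, ∫ y in P i, ‖y - x i‖ ^ p * ρ y := by
  classical
  obtain ⟨n, rfl⟩ : ∃ n, d = n + 2 := ⟨d - 2, by omega⟩
  have hM' : Nonempty (Fin M) := ⟨⟨0, hM⟩⟩
  have huniv : (Finset.univ : Finset (Fin M)).Nonempty := Finset.univ_nonempty
  have hp0 : 0 ≤ p := le_trans zero_le_one hp
  have hcont : ∀ v : EuclideanSpace ℝ (Fin (n + 2)),
      Continuous fun y : EuclideanSpace ℝ (Fin (n + 2)) => ‖y - v‖ ^ p :=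
    fun v => ((continuous_id.sub continuous_const).norm).rpow_const (fun y => Or.inr hp0)
  have hcostcont : Continuous fun z :
      EuclideanSpace ℝ (Fin (n + 2)) × EuclideanSpace ℝ (Fin (n + 2)) => ‖z.1 - z.2‖ ^ p :=
    ((continuous_fst.sub continuous_snd).norm).rpow_const (fun _ => Or.inr hp0)
  -- measurability of the cells
  have hPm : ∀ i, MeasurableSet (P i) := by
    intro i
    rw [hP i]
    have he : {y ∈ Ω | ∀ j, ‖y - x i‖ ^ p - w i ≤ ‖y - x j‖ ^ p - w j}
        = Ω ∩ ⋂ j, {y | ‖y - x i‖ ^ p - w i ≤ ‖y - x j‖ ^ p - w j} := by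
      ext y
      simp [Set.mem_iInter, Set.mem_sep_iff]
    rw [he]
    exact hΩm.inter (MeasurableSet.iInter fun j =>
      (isClosed_le ((hcont (x i)).sub continuous_const)
        ((hcont (x j)).sub continuous_const)).measurableSet)
  have hPsub : ∀ i, P i ⊆ Ω := fun i => by rw [hP i]; exact fun y hy => hy.1
  have hcover : Ω ⊆ ⋃ i, P i := by
    intro y hy
    obtain ⟨i, -, hi⟩ := Finset.exists_min_image Finset.univ
      (fun i => ‖y - x i‖ ^ p - w i) huniv
    exact Set.mem_iUnion.mpr ⟨i, by rw [hP i]; exact ⟨hy, fun j => hi j (Finset.mem_univ j)⟩⟩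
  have hnull : ∀ i j, i ≠ j → volume {y : EuclideanSpace ℝ (Fin (n + 2)) |
      ‖y - x i‖ ^ p - w i = ‖y - x j‖ ^ p - w j} = 0 := by
    intro i j hij
    have h0 := null_level p hp (x i) (x j) (fun h => hij (hx h)) (w i - w j)
    refine measure_mono_null (fun y hy => ?_) h0
    simp only [Set.mem_setOf_eq] at hy ⊢
    linarith
  -- disjointified cells
  set Q : Fin M → Set (EuclideanSpace ℝ (Fin (n + 2))) :=
    fun i => P i \ ⋃ j, ⋃ (_ : j < i), P j with hQ
  have hQm : ∀ i, MeasurableSet (Q i) := fun i =>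
    (hPm i).diff (MeasurableSet.iUnion fun j => MeasurableSet.iUnion fun _ => hPm j)
  have hQsub : ∀ i, Q i ⊆ P i := fun i => Set.diff_subset
  have hQΩ : ∀ i, Q i ⊆ Ω := fun i => (hQsub i).trans (hPsub i)
  have hQdisj : Pairwise (Function.onFun Disjoint Q) := by
    intro i j hij
    rcases hij.lt_or_gt with h | h
    · exact Set.disjoint_left.mpr (fun y hyi hyj =>
        hyj.2 (Set.mem_iUnion.mpr ⟨i, Set.mem_iUnion.mpr ⟨h, hyi.1⟩⟩))
    · exact Set.disjoint_left.mpr (fun y hyi hyj =>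
        hyi.2 (Set.mem_iUnion.mpr ⟨j, Set.mem_iUnion.mpr ⟨h, hyj.1⟩⟩))
  have hQcover : (⋃ i, Q i) = Ω := by
    apply Set.Subset.antisymm
    · exact Set.iUnion_subset fun i => (hQsub i).trans (hPsub i)
    · intro y hy
      set s := Finset.univ.filter (fun i => y ∈ P i) with hs
      have hsne : s.Nonempty := by
        obtain ⟨i, hi⟩ := Set.mem_iUnion.mp (hcover hy)
        exact ⟨i, by simp [hs, hi]⟩
      have hyi₀ : y ∈ P (s.min' hsne) := by
        have h1 := s.min'_mem hsne
        simp only [hs, Finset.mem_filter] at h1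
        exact h1.2
      refine Set.mem_iUnion.mpr ⟨s.min' hsne, hyi₀, ?_⟩
      intro hmem
      obtain ⟨j, hj⟩ := Set.mem_iUnion.mp hmem
      obtain ⟨hjlt, hyj⟩ := Set.mem_iUnion.mp hj
      exact absurd (s.min'_le j (by simp [hs, hyj])) (not_le.mpr hjlt)
  have hPQnull : ∀ i, volume (P i \ Q i) = 0 := by
    intro i
    have hsub : P i \ Q i ⊆ ⋃ j, ⋃ (_ : j < i), (P i ∩ P j) := by
      intro y hy
      obtain ⟨hyP, hyn⟩ := hy
      have h1 : y ∈ ⋃ j, ⋃ (_ : j < i), P j := by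
        by_contra h; exact hyn ⟨hyP, h⟩
      obtain ⟨j, hj⟩ := Set.mem_iUnion.mp h1
      obtain ⟨hjlt, hyj⟩ := Set.mem_iUnion.mp hj
      exact Set.mem_iUnion.mpr ⟨j, Set.mem_iUnion.mpr ⟨hjlt, hyP, hyj⟩⟩
    refine measure_mono_null hsub (measure_iUnion_null fun j => measure_iUnion_null fun hj => ?_)
    refine measure_mono_null (fun y hy => ?_) (hnull i j hj.ne')
    obtain ⟨hyi, hyj⟩ := hy
    rw [hP i] at hyi; rw [hP j] at hyj
    exact le_antisymm (hyi.2 j) (hyj.2 i)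
  have hQae : ∀ i, (Q i : Set _) =ᵐ[volume] (P i) := by
    intro i
    rw [MeasureTheory.ae_eq_set]
    exact ⟨by rw [Set.diff_eq_empty.mpr (hQsub i)]; exact measure_empty, hPQnull i⟩
  -- uniform bound on the cost over Ω
  obtain ⟨R0, hR0⟩ := hΩb.subset_closedBall 0
  set C := (2 * max R0 0) ^ p with hC
  have hC0 : 0 ≤ C := Real.rpow_nonneg (by positivity) p
  have hCb : ∀ y ∈ Ω, ∀ i, ‖y - x i‖ ^ p ≤ C := by
    intro y hy i
    have h1 : ‖y‖ ≤ max R0 0 := le_trans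
      (by simpa [Metric.mem_closedBall, dist_zero_right] using hR0 hy) (le_max_left _ _)
    have h2 : ‖x i‖ ≤ max R0 0 := le_trans
      (by simpa [Metric.mem_closedBall, dist_zero_right] using hR0 (hxΩ i)) (le_max_left _ _)
    have h3 : ‖y - x i‖ ≤ 2 * max R0 0 := by
      calc ‖y - x i‖ ≤ ‖y‖ + ‖x i‖ := norm_sub_le _ _
        _ ≤ 2 * max R0 0 := by linarith
    exact Real.rpow_le_rpow (norm_nonneg _) h3 hp0
  -- integrability of cost · ρ
  have hρaesm : AEStronglyMeasurable ρ (volume.restrict Ω) := hρi.1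
  have hIc : ∀ (i : Fin M) (s : Set (EuclideanSpace ℝ (Fin (n + 2)))), MeasurableSet s → s ⊆ Ω →
      IntegrableOn (fun y => ‖y - x i‖ ^ p * ρ y) s volume := by
    intro i s hsm hsΩ
    have h1 : IntegrableOn (fun y => C * ‖ρ y‖) s volume :=
      ((hρi.mono_set hsΩ).norm.const_mul C)
    refine Integrable.mono' h1 ?_ ?_
    · exact ((hcont (x i)).aestronglyMeasurable).mul
        (hρaesm.mono_measure (Measure.restrict_mono hsΩ le_rfl))
    · rw [ae_restrict_iff' hsm]
      refine Filter.Eventually.of_forall (fun y hy => ?_)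
      have h2 : 0 ≤ ‖y - x i‖ ^ p := Real.rpow_nonneg (norm_nonneg _) p
      simpa [Real.norm_eq_abs, abs_mul, abs_of_nonneg h2] using
        mul_le_mul_of_nonneg_right (hCb y (hsΩ hy) i) (abs_nonneg (ρ y))
  -- basic μ facts
  have hae_nn : ∀ s : Set (EuclideanSpace ℝ (Fin (n + 2))), MeasurableSet s → s ⊆ Ω →
      0 ≤ᵐ[volume.restrict s] ρ := fun s hsm hsΩ =>
    (ae_restrict_iff' hsm).mpr (Filter.Eventually.of_forall fun y hy => (hρpos y (hsΩ hy)).le)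
  have hμs : ∀ s, MeasurableSet s → s ⊆ Ω → μ s = ENNReal.ofReal (∫ y in s, ρ y) := by
    intro s hsm hsΩ
    rw [hμ, withDensity_apply _ hsm, Measure.restrict_restrict hsm,
      Set.inter_eq_self_of_subset_left hsΩ,
      ← ofReal_integral_eq_lintegral_ofReal (hρi.mono_set hsΩ) (hae_nn s hsm hsΩ)]
  have hμΩc : μ Ωᶜ = 0 := by
    rw [hμ, withDensity_apply _ hΩm.compl, Measure.restrict_restrict hΩm.compl]
    simp
  haveI hμfin : IsFiniteMeasure μ := by
    constructor
    have h1 : μ Set.univ = μ Ω + μ Ωᶜ := (measure_add_measure_compl hΩm).symm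
    rw [h1, hμΩc, hμs Ω hΩm subset_rfl, add_zero]
    exact ENNReal.ofReal_lt_top
  have hμrestrict : ∀ s, MeasurableSet s → s ⊆ Ω →
      μ.restrict s = (volume.restrict s).withDensity (fun y => ENNReal.ofReal (ρ y)) := by
    intro s hsm hsΩ
    rw [hμ, restrict_withDensity hsm, Measure.restrict_restrict hsm,
      Set.inter_eq_self_of_subset_left hsΩ]
  have hμsum : μ = ∑ i, μ.restrict (Q i) := by
    ext s hs
    rw [Measure.finset_sum_apply]
    simp_rw [Measure.restrict_apply hs]
    have h1 : μ s = μ (s ∩ Ω) := by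
      apply le_antisymm
      · calc μ s = μ ((s ∩ Ω) ∪ (s ∩ Ωᶜ)) := by
              rw [← Set.inter_union_distrib_left, Set.union_compl_self, Set.inter_univ]
          _ ≤ μ (s ∩ Ω) + μ (s ∩ Ωᶜ) := measure_union_le _ _
          _ ≤ μ (s ∩ Ω) + 0 := by
              gcongr
              exact le_of_eq (measure_mono_null Set.inter_subset_right hμΩc)
          _ = μ (s ∩ Ω) := add_zero _
      · exact measure_mono Set.inter_subset_left
    have h2 : s ∩ Ω = ⋃ i, s ∩ Q i := by
      rw [← hQcover, Set.inter_iUnion]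
    rw [h1, h2, measure_iUnion (hQdisj.mono fun i j h => h.mono
        Set.inter_subset_right Set.inter_subset_right) (fun i => hs.inter (hQm i)),
      tsum_fintype]
  have hmQ : ∀ i, μ (Q i) = ENNReal.ofReal (∫ y in P i, ρ y) := by
    intro i
    rw [hμs (Q i) (hQm i) (hQΩ i), setIntegral_congr_set (hQae i)]
  -- the explicit optimal coupling
  have hgm : ∀ i, Measurable (fun y : EuclideanSpace ℝ (Fin (n + 2)) => (y, x i)) :=
    fun i => measurable_id.prodMk measurable_const
  set γ₀ : Measure (EuclideanSpace ℝ (Fin (n + 2)) × EuclideanSpace ℝ (Fin (n + 2))) :=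
    ∑ i, (μ.restrict (Q i)).map (fun y => (y, x i)) with hγ₀
  have hmarg1 : γ₀.map Prod.fst = μ := by
    rw [hγ₀, measure_map_finset_sum _ _ measurable_fst]
    have h1 : ∀ i, ((μ.restrict (Q i)).map (fun y => (y, x i))).map Prod.fst
        = μ.restrict (Q i) := by
      intro i
      rw [Measure.map_map measurable_fst (hgm i)]
      have h2 : (Prod.fst ∘ fun y : EuclideanSpace ℝ (Fin (n + 2)) => (y, x i)) = id := rfl
      rw [h2, Measure.map_id]
    simp_rw [h1]
    exact hμsum.symm
  have hmarg2 : γ₀.map Prod.snd = ν := by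
    rw [hγ₀, measure_map_finset_sum _ _ measurable_snd, hν]
    refine Finset.sum_congr rfl fun i _ => ?_
    rw [Measure.map_map measurable_snd (hgm i)]
    have h2 : (Prod.snd ∘ fun y : EuclideanSpace ℝ (Fin (n + 2)) => (y, x i))
        = (fun _ => x i) := rfl
    rw [h2, Measure.map_const, Measure.restrict_apply_univ, hmQ i]
  -- value of the cost for γ₀
  have htoNN : ∀ i : Fin M, AEMeasurable (fun y => (ρ y).toNNReal) (volume.restrict (Q i)) := by
    intro i
    exact ((hρaesm.mono_measure (Measure.restrict_mono (hQΩ i) le_rfl)).aemeasurable).real_toNNReal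
  have hdens : (fun y => ENNReal.ofReal (ρ y))
      = fun y => (((ρ y).toNNReal) : ℝ≥0∞) := rfl
  have hQint : ∀ i, ∫ y, ‖y - x i‖ ^ p ∂(μ.restrict (Q i)) = ∫ y in P i, ‖y - x i‖ ^ p * ρ y := by
    intro i
    rw [hμrestrict (Q i) (hQm i) (hQΩ i), hdens,
      integral_withDensity_eq_integral_smul₀ (htoNN i)]
    rw [setIntegral_congr_fun (hQm i) (g := fun y => ‖y - x i‖ ^ p * ρ y) (fun y hy => by
      have h3 : (0:ℝ) ≤ ρ y := (hρpos y (hQΩ i hy)).le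
      simp [NNReal.smul_def, Real.coe_toNNReal _ h3, mul_comm])]
    exact setIntegral_congr_set (hQae i)
  have hQcostint : ∀ i, Integrable (fun y => ‖y - x i‖ ^ p) (μ.restrict (Q i)) := by
    intro i
    haveI : IsFiniteMeasure (μ.restrict (Q i)) := inferInstance
    refine Integrable.mono' (integrable_const C) (hcont (x i)).aestronglyMeasurable ?_
    have h4 : ∀ᵐ y ∂μ.restrict (Q i), y ∈ Q i := by
      rw [ae_restrict_iff' (hQm i)]
      exact Filter.Eventually.of_forall fun y hy => hy
    filter_upwards [h4] with y hy
    rw [Real.norm_eq_abs, abs_of_nonneg (Real.rpow_nonneg (norm_nonneg _) p)]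
    exact hCb y (hQΩ i hy) i
  have hcostint0 : ∀ i : Fin M,
      Integrable (fun z : EuclideanSpace ℝ (Fin (n + 2)) × EuclideanSpace ℝ (Fin (n + 2)) =>
        ‖z.1 - z.2‖ ^ p) ((μ.restrict (Q i)).map (fun y => (y, x i))) := by
    intro i
    rw [integrable_map_measure hcostcont.aestronglyMeasurable (hgm i).aemeasurable]
    exact hQcostint i
  have hcost₀ : ∫ z, ‖z.1 - z.2‖ ^ p ∂γ₀ = ∑ i, ∫ y in P i, ‖y - x i‖ ^ p * ρ y := by
    rw [hγ₀, integral_finset_sum_measure (fun i _ => hcostint0 i)]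
    refine Finset.sum_congr rfl fun i _ => ?_
    rw [integral_map (hgm i).aemeasurable hcostcont.aestronglyMeasurable]
    exact hQint i
  -- the Kantorovich potentials
  set φ : EuclideanSpace ℝ (Fin (n + 2)) → ℝ :=
    fun y => Finset.univ.inf' huniv (fun i => ‖y - x i‖ ^ p - w i) with hφdef
  have hφcont : Continuous φ :=
    continuous_finset_inf' (fun i => (hcont (x i)).sub continuous_const) huniv
  have hφle : ∀ y j, φ y ≤ ‖y - x j‖ ^ p - w j :=
    fun y j => Finset.inf'_le _ (Finset.mem_univ j)
  have hφP : ∀ i, ∀ y ∈ P i, φ y = ‖y - x i‖ ^ p - w i := by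
    intro i y hy
    rw [hP i] at hy
    exact le_antisymm (hφle y i) (Finset.le_inf' _ _ fun j _ => hy.2 j)
  set W := ∑ j, |w j| with hWdef
  have hφbdd : ∀ y ∈ Ω, |φ y| ≤ C + W := by
    intro y hy
    obtain ⟨j, -, hj⟩ := Finset.exists_mem_eq_inf' huniv (fun i => ‖y - x i‖ ^ p - w i)
    have hφy : φ y = ‖y - x j‖ ^ p - w j := hj
    rw [hφy]
    have h2 : |w j| ≤ W := Finset.single_le_sum (fun i _ => abs_nonneg (w i)) (Finset.mem_univ j)
    have h3 : 0 ≤ ‖y - x j‖ ^ p := Real.rpow_nonneg (norm_nonneg _) p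
    have h4 := hCb y hy j
    rw [abs_le]
    have h5 := le_abs_self (w j)
    have h6 := neg_abs_le (w j)
    constructor <;> nlinarith
  set ψ : EuclideanSpace ℝ (Fin (n + 2)) → ℝ :=
    fun z => ∑ j, if z = x j then w j else 0 with hψdef
  have hψm : Measurable ψ := by
    refine Finset.measurable_sum _ (fun j _ => ?_)
    exact Measurable.ite (by
      have : {z : EuclideanSpace ℝ (Fin (n + 2)) | z = x j} = {x j} := by ext z; simp
      rw [this]; exact measurableSet_singleton _) measurable_const measurable_const
  have hψx : ∀ j, ψ (x j) = w j := by
    intro j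
    have h1 : ∀ i, (if x j = x i then w i else 0) = (if j = i then w i else 0) := by
      intro i
      by_cases h : j = i
      · subst h; simp
      · rw [if_neg (fun he => h (hx he)), if_neg h]
    calc ψ (x j) = ∑ i, if j = i then w i else 0 := Finset.sum_congr rfl fun i _ => h1 i
      _ = w j := by rw [Finset.sum_ite_eq]; simp
  have hψbdd : ∀ z, |ψ z| ≤ W := by
    intro z
    calc |ψ z| ≤ ∑ j, |if z = x j then w j else 0| := Finset.abs_sum_le_sum_abs _ _
      _ ≤ ∑ j, |w j| := Finset.sum_le_sum fun j _ => by
          split <;> simp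
  -- value of the integrals of the potentials
  have hφintQ : ∀ i, Integrable φ (μ.restrict (Q i)) := by
    intro i
    haveI : IsFiniteMeasure (μ.restrict (Q i)) := inferInstance
    refine Integrable.mono' (integrable_const (C + W)) hφcont.aestronglyMeasurable ?_
    rw [ae_restrict_iff' (hQm i)]
    exact Filter.Eventually.of_forall fun y hy => by
      rw [Real.norm_eq_abs]; exact hφbdd y (hQΩ i hy)
  have hφμval : ∫ y, φ y ∂μ
      = ∑ i, ((∫ y in P i, ‖y - x i‖ ^ p * ρ y) - w i * ∫ y in P i, ρ y) := by
    conv_lhs => rw [hμsum]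
    rw [integral_finset_sum_measure (fun i _ => hφintQ i)]
    refine Finset.sum_congr rfl fun i _ => ?_
    rw [hμrestrict (Q i) (hQm i) (hQΩ i), hdens,
      integral_withDensity_eq_integral_smul₀ (htoNN i)]
    rw [setIntegral_congr_fun (hQm i)
      (g := fun y => ‖y - x i‖ ^ p * ρ y - w i * ρ y) (fun y hy => by
        have h3 : (0:ℝ) ≤ ρ y := (hρpos y (hQΩ i hy)).le
        have h4 : φ y = ‖y - x i‖ ^ p - w i := hφP i y (hQsub i hy)
        simp [NNReal.smul_def, Real.coe_toNNReal _ h3, h4]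
        ring)]
    rw [integral_sub (hIc i (Q i) (hQm i) (hQΩ i))
      ((hρi.mono_set (hQΩ i)).const_mul (w i)), integral_const_mul]
    rw [setIntegral_congr_set (hQae i),
      setIntegral_congr_set (μ := volume) (f := ρ) (hQae i)]
  have hintρP : ∀ i, (0:ℝ) ≤ ∫ y in P i, ρ y := fun i =>
    setIntegral_nonneg (hPm i) (fun y hy => (hρpos y (hPsub i hy)).le)
  have hψνval : ∫ y, ψ y ∂ν = ∑ i, (∫ y in P i, ρ y) * w i := by
    rw [hν]
    rw [integral_finset_sum_measure (fun i _ => ?_)]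
    · refine Finset.sum_congr rfl fun i _ => ?_
      rw [integral_smul_measure, integral_dirac, hψx i, smul_eq_mul,
        ENNReal.toReal_ofReal (hintρP i)]
    · refine Integrable.smul_measure ?_ ENNReal.ofReal_ne_top
      refine Integrable.mono' (integrable_const W) hψm.aestronglyMeasurable ?_
      exact Filter.Eventually.of_forall fun z => by rw [Real.norm_eq_abs]; exact hψbdd z
  have hsumval : (∫ y, φ y ∂μ) + ∫ y, ψ y ∂ν = ∑ i, ∫ y in P i, ‖y - x i‖ ^ p * ρ y := by
    rw [hφμval, hψνval, ← Finset.sum_add_distrib]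
    refine Finset.sum_congr rfl fun i _ => by ring
  -- lower bound for any admissible coupling
  have hlb : ∀ c ∈ {c : ℝ | ∃ γ : Measure (EuclideanSpace ℝ (Fin (n + 2)) ×
        EuclideanSpace ℝ (Fin (n + 2))),
        γ.map Prod.fst = μ ∧ γ.map Prod.snd = ν ∧ c = ∫ z, ‖z.1 - z.2‖ ^ p ∂γ},
      (∑ i, ∫ y in P i, ‖y - x i‖ ^ p * ρ y) ≤ c := by
    rintro c ⟨γ, hγ1, hγ2, rfl⟩
    haveI hγfin : IsFiniteMeasure γ := by
      constructor
      have h1 : γ Set.univ = μ Set.univ := by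
        rw [← hγ1, Measure.map_apply measurable_fst MeasurableSet.univ, Set.preimage_univ]
      rw [h1]
      exact measure_lt_top μ _
    have haeΩ : ∀ᵐ z ∂γ, z.1 ∈ Ω := by
      have h1 : γ (Prod.fst ⁻¹' Ωᶜ) = 0 := by
        rw [← Measure.map_apply measurable_fst hΩm.compl, hγ1]; exact hμΩc
      have h2 : {z : EuclideanSpace ℝ (Fin (n + 2)) × EuclideanSpace ℝ (Fin (n + 2)) |
          ¬ z.1 ∈ Ω} = Prod.fst ⁻¹' Ωᶜ := rfl
      rw [ae_iff, h2]; exact h1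
    have haex : ∀ᵐ z ∂γ, ∃ j, z.2 = x j := by
      have hm : MeasurableSet (⋃ j, {x j} : Set (EuclideanSpace ℝ (Fin (n + 2)))) :=
        MeasurableSet.iUnion fun j => measurableSet_singleton _
      have hν0 : ν (⋃ j, {x j})ᶜ = 0 := by
        rw [hν, Measure.finset_sum_apply]
        refine Finset.sum_eq_zero fun i _ => ?_
        rw [Measure.smul_apply, Measure.dirac_apply' _ hm.compl]
        have : x i ∈ (⋃ j, {x j} : Set (EuclideanSpace ℝ (Fin (n + 2)))) :=
          Set.mem_iUnion.mpr ⟨i, rfl⟩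
        rw [Set.indicator_of_notMem (by simpa using this)]
        simp
      have h1 : γ (Prod.snd ⁻¹' (⋃ j, {x j})ᶜ) = 0 := by
        rw [← Measure.map_apply measurable_snd hm.compl, hγ2]; exact hν0
      rw [ae_iff]
      refine measure_mono_null (fun z hz => ?_) h1
      simp only [Set.mem_setOf_eq] at hz
      push_neg at hz
      simp only [Set.mem_preimage, Set.mem_compl_iff, Set.mem_iUnion, Set.mem_singleton_iff]
      push_neg
      exact hz
    have hcostintγ : Integrable (fun z : EuclideanSpace ℝ (Fin (n + 2)) ×
        EuclideanSpace ℝ (Fin (n + 2)) => ‖z.1 - z.2‖ ^ p) γ := by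
      refine Integrable.mono' (integrable_const C) hcostcont.aestronglyMeasurable ?_
      filter_upwards [haeΩ, haex] with z hzΩ hzx
      obtain ⟨j, hj⟩ := hzx
      rw [Real.norm_eq_abs, abs_of_nonneg (Real.rpow_nonneg (norm_nonneg _) p), hj]
      exact hCb z.1 hzΩ j
    have hφintγ : Integrable (fun z : EuclideanSpace ℝ (Fin (n + 2)) ×
        EuclideanSpace ℝ (Fin (n + 2)) => φ z.1) γ := by
      refine Integrable.mono' (integrable_const (C + W))
        (hφcont.comp continuous_fst).aestronglyMeasurable ?_
      filter_upwards [haeΩ] with z hz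
      rw [Real.norm_eq_abs]; exact hφbdd z.1 hz
    have hψintγ : Integrable (fun z : EuclideanSpace ℝ (Fin (n + 2)) ×
        EuclideanSpace ℝ (Fin (n + 2)) => ψ z.2) γ := by
      refine Integrable.mono' (integrable_const W)
        ((hψm.comp measurable_snd).aestronglyMeasurable) ?_
      exact Filter.Eventually.of_forall fun z => by rw [Real.norm_eq_abs]; exact hψbdd z.2
    have hkey : ∀ᵐ z ∂γ, φ z.1 + ψ z.2 ≤ ‖z.1 - z.2‖ ^ p := by
      filter_upwards [haex] with z hz
      obtain ⟨j, hj⟩ := hz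
      rw [hj, hψx j]
      have h1 := hφle z.1 j
      rw [← hj]
      rw [hj]
      linarith
    have hstep1 : ∫ z, (φ z.1 + ψ z.2) ∂γ ≤ ∫ z, ‖z.1 - z.2‖ ^ p ∂γ :=
      integral_mono_ae (hφintγ.add hψintγ) hcostintγ hkey
    rw [integral_add hφintγ hψintγ] at hstep1
    have hφμ : ∫ z, φ z.1 ∂γ = ∫ y, φ y ∂μ := by
      rw [← hγ1, integral_map measurable_fst.aemeasurable]
      rw [hγ1]
      exact hφcont.aestronglyMeasurable
    have hψν : ∫ z, ψ z.2 ∂γ = ∫ y, ψ y ∂ν := by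
      rw [← hγ2, integral_map measurable_snd.aemeasurable]
      rw [hγ2]
      exact hψm.aestronglyMeasurable
    rw [hφμ, hψν, hsumval] at hstep1
    exact hstep1
  -- conclusion
  have hmem : (∑ i, ∫ y in P i, ‖y - x i‖ ^ p * ρ y) ∈
      {c : ℝ | ∃ γ : Measure (EuclideanSpace ℝ (Fin (n + 2)) ×
        EuclideanSpace ℝ (Fin (n + 2))),
        γ.map Prod.fst = μ ∧ γ.map Prod.snd = ν ∧ c = ∫ z, ‖z.1 - z.2‖ ^ p ∂γ} :=
    ⟨γ₀, hmarg1, hmarg2, hcost₀.symm⟩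
  exact le_antisymm (csInf_le ⟨_, hlb⟩ hmem) (le_csInf ⟨_, hmem⟩ hlb)
end

section
/- (Strict concavity of the dual objective in non-constant directions.) Fix distinct x_1,…,x_M ∈ Ω ⊂ ℝ^d (Ω bounded measurable, with positive Lebesgue measure) and masses m_i > 0 with Σ m_i = |Ω|. Define f: ℝ^M → ℝ by f(a) = inf over measurable partitions {Ω_i} of Ω of Σ_i ∫_{Ω_i} (|x - x_i|^p - a_i) dx + Σ_i m_i a_i. Then f is concave, f(a + b·(1,…,1)) = f(a) for all b ∈ ℝ, and whenever {Ω_i} is an optimal partition for a, f(a + ã) - f(a) ≤ Σ_i ã_i (m_i - |Ω_i|) for all ã ∈ ℝ^M. -/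
open MeasureTheory

private def dualP {d M : ℕ} (Ω : Set (EuclideanSpace ℝ (Fin d)))
    (S : Fin M → Set (EuclideanSpace ℝ (Fin d))) : Prop :=
  (∀ i, MeasurableSet (S i)) ∧ (⋃ i, S i) = Ω ∧
    ∀ i j, i ≠ j → volume (S i ∩ S j) = 0

private noncomputable def dualL {d M : ℕ} (p : ℝ)
    (x : Fin M → EuclideanSpace ℝ (Fin d)) (m : Fin M → ℝ)
    (S : Fin M → Set (EuclideanSpace ℝ (Fin d))) (a : Fin M → ℝ) : ℝ :=
  (∑ i, ∫ y in S i, ‖y - x i‖ ^ p) +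
    ∑ i, a i * (m i - (volume (S i)).toReal)

/-- Strict concavity of the dual objective in non-constant
directions (key lemma for uniqueness of Kantorovich potentials).  With
f(a) = inf over measurable partitions {Ω_i} of Ω of
Σ_i ∫_{Ω_i} (|x-x_i|^p - a_i) dx + Σ_i m_i a_i:
f is concave, invariant under adding a constant vector, and for any optimal
partition {S_i} for a, f(a + aTilde) - f(a) ≤ Σ_i aTilde_i (m_i - |S_i|). -/
theorem dual_objective_concave_shift_invariant
    {d M : ℕ} (p : ℝ) (hp : 1 ≤ p)
    (Ω : Set (EuclideanSpace ℝ (Fin d))) (hΩm : MeasurableSet Ω)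
    (hΩb : Bornology.IsBounded Ω) (hΩpos : 0 < volume Ω)
    (x : Fin M → EuclideanSpace ℝ (Fin d)) (hx : Function.Injective x)
    (hxΩ : ∀ i, x i ∈ Ω)
    (m : Fin M → ℝ) (hm : ∀ i, 0 < m i) (hmsum : ∑ i, m i = (volume Ω).toReal)
    (f : (Fin M → ℝ) → ℝ)
    (hf : ∀ a, f a = sInf {c : ℝ | ∃ S : Fin M → Set (EuclideanSpace ℝ (Fin d)),
        (∀ i, MeasurableSet (S i)) ∧ (⋃ i, S i) = Ω ∧
        (∀ i j, i ≠ j → volume (S i ∩ S j) = 0) ∧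
        c = (∑ i, ∫ y in S i, (‖y - x i‖ ^ p - a i)) + ∑ i, m i * a i}) :
    ConcaveOn ℝ Set.univ f ∧
    (∀ a : Fin M → ℝ, ∀ b : ℝ, f (a + fun _ => b) = f a) ∧
    (∀ a : Fin M → ℝ, ∀ S : Fin M → Set (EuclideanSpace ℝ (Fin d)),
      (∀ i, MeasurableSet (S i)) → (⋃ i, S i) = Ω →
      (∀ i j, i ≠ j → volume (S i ∩ S j) = 0) →
      ((∑ i, ∫ y in S i, (‖y - x i‖ ^ p - a i)) + ∑ i, m i * a i = f a) →
      ∀ aTilde : Fin M → ℝ,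
        f (a + aTilde) - f a ≤ ∑ i, aTilde i * (m i - (volume (S i)).toReal)) := by
  classical
  have hμfin : volume Ω ≠ ⊤ := hΩb.measure_lt_top.ne
  have hμΩreal : (0:ℝ) < (volume Ω).toReal := ENNReal.toReal_pos hΩpos.ne' hμfin
  have hM : Nonempty (Fin M) := by
    by_contra h
    rw [not_nonempty_iff] at h
    rw [Finset.univ_eq_empty, Finset.sum_empty] at hmsum
    linarith
  obtain ⟨i0⟩ := hM
  obtain ⟨R, hR⟩ := hΩb.subset_closedBall 0
  have hcont : ∀ i, Continuous fun y : EuclideanSpace ℝ (Fin d) => ‖y - x i‖ ^ p := by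
    intro i
    exact (continuous_id.sub continuous_const).norm.rpow_const
      (fun y => Or.inr (by linarith))
  have hint : ∀ (i : Fin M) (s : Set (EuclideanSpace ℝ (Fin d))), s ⊆ Ω →
      IntegrableOn (fun y => ‖y - x i‖ ^ p) s := by
    intro i s hsub
    have h1 : IntegrableOn (fun y => ‖y - x i‖ ^ p) (Metric.closedBall 0 R) :=
      ((hcont i).continuousOn).integrableOn_compact (isCompact_closedBall 0 R)
    exact h1.mono_set (hsub.trans hR)
  have hSsub : ∀ S : Fin M → Set (EuclideanSpace ℝ (Fin d)), dualP Ω S → ∀ i, S i ⊆ Ω := by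
    intro S hS i
    rw [← hS.2.1]
    exact Set.subset_iUnion S i
  have hμS : ∀ S : Fin M → Set (EuclideanSpace ℝ (Fin d)), dualP Ω S → ∀ i, volume (S i) ≤ volume Ω := fun S hS i =>
    measure_mono (hSsub S hS i)
  have hμSfin : ∀ S : Fin M → Set (EuclideanSpace ℝ (Fin d)), dualP Ω S → ∀ i, volume (S i) ≠ ⊤ := fun S hS i =>
    ((hμS S hS i).trans_lt hΩb.measure_lt_top).ne
  -- value of the objective equals dualL
  have hval : ∀ S : Fin M → Set (EuclideanSpace ℝ (Fin d)), dualP Ω S → ∀ a : Fin M → ℝ,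
      (∑ i, ∫ y in S i, (‖y - x i‖ ^ p - a i)) + ∑ i, m i * a i = dualL p x m S a := by
    intro S hS a
    have h1 : ∀ i : Fin M, (∫ y in S i, (‖y - x i‖ ^ p - a i)) =
        (∫ y in S i, ‖y - x i‖ ^ p) - a i * (volume (S i)).toReal := by
      intro i
      rw [integral_sub (hint i (S i) (hSsub S hS i))
        (integrableOn_const (hμSfin S hS i))]
      rw [setIntegral_const, smul_eq_mul, measureReal_def]
      ring
    simp only [h1, dualL]
    have h2 : ∀ i : Fin M, a i * (m i - (volume (S i)).toReal)
        = m i * a i - a i * (volume (S i)).toReal := fun i => by ring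
    simp only [h2, Finset.sum_sub_distrib]
    ring
  have hf' : ∀ a, f a = sInf {c | ∃ S, dualP Ω S ∧ c = dualL p x m S a} := by
    intro a
    rw [hf a]
    congr 1
    ext c
    simp only [Set.mem_setOf_eq]
    constructor
    · rintro ⟨S, h1, h2, h3, h4⟩
      exact ⟨S, ⟨h1, h2, h3⟩, h4.trans (hval S ⟨h1, h2, h3⟩ a)⟩
    · rintro ⟨S, hS, hc⟩
      exact ⟨S, hS.1, hS.2.1, hS.2.2, hc.trans (hval S hS a).symm⟩
  -- nonemptiness
  have hPne : ∀ a : Fin M → ℝ,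
      Set.Nonempty {c | ∃ S, dualP Ω S ∧ c = dualL p x m S a} := by
    intro a
    refine ⟨dualL p x m (fun i => if i = i0 then Ω else ∅) a, ⟨_, ⟨?_, ?_, ?_⟩, rfl⟩⟩
    · intro i; by_cases h : i = i0 <;> simp [h, hΩm]
    · apply Set.eq_of_subset_of_subset
      · exact Set.iUnion_subset fun i => by by_cases h : i = i0 <;> simp [h]
      · intro y hy
        exact Set.mem_iUnion.2 ⟨i0, by simp [hy]⟩
    · intro i j hij
      by_cases h : i = i0
      · have hj : j ≠ i0 := fun hj => hij (h.trans hj.symm)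
        simp [h, hj]
      · simp [h]
  -- sum of measures
  have hμsum : ∀ S : Fin M → Set (EuclideanSpace ℝ (Fin d)), dualP Ω S → ∑ i, (volume (S i)).toReal = (volume Ω).toReal := by
    intro S hS
    have h0 : volume (⋃ i, S i) = ∑' i, volume (S i) :=
      measure_iUnion₀ (fun i j hij => hS.2.2 i j hij)
        (fun i => (hS.1 i).nullMeasurableSet)
    rw [hS.2.1, tsum_fintype] at h0
    rw [h0, ENNReal.toReal_sum (fun i _ => hμSfin S hS i)]
  -- lower bound
  have hbdd : ∀ a : Fin M → ℝ, ∀ c ∈ {c | ∃ S, dualP Ω S ∧ c = dualL p x m S a},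
      -(∑ i, |a i| * (m i + (volume Ω).toReal)) ≤ c := by
    rintro a c ⟨S, hS, rfl⟩
    have h1 : 0 ≤ ∑ i, ∫ y in S i, ‖y - x i‖ ^ p :=
      Finset.sum_nonneg fun i _ => setIntegral_nonneg (hS.1 i)
        fun y _ => Real.rpow_nonneg (norm_nonneg _) p
    have h2 : ∀ i : Fin M, -(|a i| * (m i + (volume Ω).toReal))
        ≤ a i * (m i - (volume (S i)).toReal) := by
      intro i
      have hμi : (volume (S i)).toReal ≤ (volume Ω).toReal :=
        ENNReal.toReal_mono hμfin (hμS S hS i)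
      have hμi0 : (0:ℝ) ≤ (volume (S i)).toReal := ENNReal.toReal_nonneg
      have habs : |m i - (volume (S i)).toReal| ≤ m i + (volume Ω).toReal := by
        rw [abs_sub_le_iff]
        constructor <;> nlinarith [(hm i).le]
      calc -(|a i| * (m i + (volume Ω).toReal))
          ≤ -(|a i| * |m i - (volume (S i)).toReal|) := by
            apply neg_le_neg
            exact mul_le_mul_of_nonneg_left habs (abs_nonneg _)
        _ = -|a i * (m i - (volume (S i)).toReal)| := by rw [abs_mul]
        _ ≤ a i * (m i - (volume (S i)).toReal) := neg_abs_le _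
    have h3 : ∑ i, -(|a i| * (m i + (volume Ω).toReal))
        ≤ ∑ i, a i * (m i - (volume (S i)).toReal) :=
      Finset.sum_le_sum fun i _ => h2 i
    rw [Finset.sum_neg_distrib] at h3
    simp only [dualL]
    linarith
  have hBdd : ∀ a : Fin M → ℝ,
      BddBelow {c | ∃ S, dualP Ω S ∧ c = dualL p x m S a} := fun a =>
    ⟨_, hbdd a⟩
  have hle : ∀ (a : Fin M → ℝ) S, dualP Ω S → f a ≤ dualL p x m S a := by
    intro a S hS
    rw [hf' a]
    exact csInf_le (hBdd a) ⟨S, hS, rfl⟩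
  -- shift
  have hshift : ∀ S : Fin M → Set (EuclideanSpace ℝ (Fin d)), dualP Ω S → ∀ (a : Fin M → ℝ) (b : ℝ),
      dualL p x m S (a + fun _ => b) = dualL p x m S a := by
    intro S hS a b
    simp only [dualL, Pi.add_apply]
    simp only [add_mul, Finset.sum_add_distrib, ← Finset.mul_sum,
      Finset.sum_sub_distrib, hμsum S hS, hmsum, sub_self, mul_zero, add_zero]
  refine ⟨?_, ?_, ?_⟩
  · -- concavity
    refine ⟨convex_univ, ?_⟩
    intro a _ a' _ σ τ hσ hτ hστ
    rw [hf' (σ • a + τ • a')]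
    apply le_csInf (hPne _)
    rintro c ⟨S, hS, rfl⟩
    have haff : dualL p x m S (σ • a + τ • a')
        = σ * dualL p x m S a + τ * dualL p x m S a' := by
      simp only [dualL, Pi.add_apply, Pi.smul_apply, smul_eq_mul]
      have key : ∑ i, (σ * a i + τ * a' i) * (m i - (volume (S i)).toReal)
          = σ * ∑ i, a i * (m i - (volume (S i)).toReal)
            + τ * ∑ i, a' i * (m i - (volume (S i)).toReal) := by
        rw [Finset.mul_sum, Finset.mul_sum, ← Finset.sum_add_distrib]
        exact Finset.sum_congr rfl fun i _ => by ring
      rw [key, show σ = 1 - τ by linarith]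
      ring
    rw [haff]
    have h1 := hle a S hS
    have h2 := hle a' S hS
    simp only [smul_eq_mul]
    nlinarith [mul_le_mul_of_nonneg_left h1 hσ, mul_le_mul_of_nonneg_left h2 hτ]
  · -- shift invariance
    intro a b
    rw [hf' (a + fun _ => b), hf' a]
    congr 1
    ext c
    simp only [Set.mem_setOf_eq]
    constructor
    · rintro ⟨S, hS, rfl⟩
      exact ⟨S, hS, (hshift S hS a b)⟩
    · rintro ⟨S, hS, rfl⟩
      exact ⟨S, hS, (hshift S hS a b).symm⟩
  · -- subgradient inequality
    intro a S hSm hSu hSd hopt aTilde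
    have hS : dualP Ω S := ⟨hSm, hSu, hSd⟩
    have hfa : f a = dualL p x m S a := by
      rw [← hopt]
      exact hval S hS a
    have h1 : f (a + aTilde) ≤ dualL p x m S (a + aTilde) := hle _ S hS
    have h2 : dualL p x m S (a + aTilde) = dualL p x m S a
        + ∑ i, aTilde i * (m i - (volume (S i)).toReal) := by
      simp only [dualL, Pi.add_apply, add_mul, Finset.sum_add_distrib]
      ring
    linarith
end

section
/- (Invariance of f under constant shifts and dual formula.) With f as above, f(a) = ∫_Ω min_i (|x - x_i|^p - a_i) dx + Σ_i m_i a_i, and the infimum over partitions is attained by the p-power diagram with weights a_i. -/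
open MeasureTheory


lemma aux_hasDeriv (p s2 c : ℝ) (hs : 0 < s2) (t : ℝ) :
    HasDerivAt (fun t : ℝ => ((t - c)^2 + s2)^(p/2))
      (p * (t - c) * (((t - c)^2 + s2)^(p/2 - 1))) t := by
  have hbase : HasDerivAt (fun t : ℝ => (t - c)^2 + s2) (2 * (t - c)) t := by
    have h1 : HasDerivAt (fun t : ℝ => t - c) 1 t := (hasDerivAt_id t).sub_const c
    have := (h1.pow 2).add_const s2
    simpa [mul_comm] using this
  have hne : (t - c)^2 + s2 ≠ 0 := by positivity
  have := hbase.rpow_const (p := p/2) (Or.inl hne)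
  convert this using 1
  ring

lemma aux_strictMono (p r s2 : ℝ) (hp : 1 ≤ p) (hr : 0 < r) (hs : 0 < s2) :
    StrictMono (fun t : ℝ => (t^2 + s2)^(p/2) - ((t - r)^2 + s2)^(p/2)) := by
  set q1 : ℝ → ℝ := fun t => p * t * ((t^2 + s2)^(p/2 - 1)) with hq1
  have hq : ∀ t : ℝ, HasDerivAt (fun t : ℝ => (t^2 + s2)^(p/2)) (q1 t) t := by
    intro t
    have := aux_hasDeriv p s2 0 hs t
    simpa using this
  have hq1deriv : ∀ t : ℝ, HasDerivAt q1
      (p * ((t^2 + s2)^(p/2 - 2)) * ((p - 1) * t^2 + s2)) t := by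
    intro t
    have hbase : HasDerivAt (fun t : ℝ => t^2 + s2) (2 * t) t := by
      have := ((hasDerivAt_id t).pow 2).add_const s2
      simpa [mul_comm] using this
    have hpos : (0:ℝ) < t^2 + s2 := by positivity
    have hne : t^2 + s2 ≠ 0 := ne_of_gt hpos
    have h2 : HasDerivAt (fun t : ℝ => (t^2 + s2)^(p/2 - 1))
        ((2 * t) * (p/2 - 1) * (t^2 + s2)^(p/2 - 1 - 1)) t :=
      hbase.rpow_const (Or.inl hne)
    have h3 : HasDerivAt (fun t : ℝ => p * t) p t := by
      simpa using (hasDerivAt_id t).const_mul p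
    have h4 : HasDerivAt q1 (p * (t ^ 2 + s2) ^ (p / 2 - 1) + p * t * (2 * t * (p / 2 - 1) * (t ^ 2 + s2) ^ (p / 2 - 1 - 1))) t := h3.mul h2
    convert h4 using 1
    have e1 : (t^2 + s2)^(p/2 - 1) = (t^2 + s2)^(p/2 - 2) * (t^2 + s2) := by
      rw [← Real.rpow_add_one hne]
      ring_nf
    have e2 : (p/2 - 1 - 1 : ℝ) = p/2 - 2 := by ring
    rw [e2, e1]
    ring
  have hq1mono : StrictMono q1 := by
    apply strictMono_of_deriv_pos
    intro t
    rw [(hq1deriv t).deriv]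
    have h1 : (0:ℝ) < (t^2 + s2)^(p/2 - 2) := Real.rpow_pos_of_pos (by positivity) _
    have h2 : (0:ℝ) < (p - 1) * t^2 + s2 := by nlinarith [sq_nonneg t]
    positivity
  apply strictMono_of_deriv_pos
  intro t
  have hd : HasDerivAt (fun t : ℝ => (t^2 + s2)^(p/2) - ((t - r)^2 + s2)^(p/2))
      (q1 t - q1 (t - r)) t := by
    have h2 := aux_hasDeriv p s2 r hs t
    have : HasDerivAt (fun t : ℝ => (t^2 + s2)^(p/2) - ((t - r)^2 + s2)^(p/2)) (q1 t - q1 (t - r)) t := (hq t).sub h2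
    convert this using 1
  rw [hd.deriv]
  have : q1 (t - r) < q1 t := hq1mono (by linarith)
  linarith

lemma cont_rpow_norm {E : Type*} [NormedAddCommGroup E] (p : ℝ) (hp : 1 ≤ p) (z : E) :
    Continuous (fun y : E => ‖y - z‖ ^ p) :=
  (continuous_norm.comp (continuous_id.sub continuous_const)).rpow_const
    (fun y => Or.inr (le_trans zero_le_one hp))

lemma level_null {n : ℕ} (p : ℝ) (hp : 1 ≤ p)
    (x₁ x₂ : EuclideanSpace ℝ (Fin (n+2))) (hne : x₁ ≠ x₂) (c : ℝ) :
    volume {y : EuclideanSpace ℝ (Fin (n+2)) | ‖y - x₁‖ ^ p - ‖y - x₂‖ ^ p = c} = 0 := by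
  set v := x₂ - x₁ with hv
  have hvne : v ≠ 0 := sub_ne_zero.mpr hne.symm
  set r := ‖v‖ with hrdef
  have hr : 0 < r := norm_pos_iff.mpr hvne
  set u := r⁻¹ • v with hu
  have hunorm : ‖u‖ = 1 := by
    rw [hu, norm_smul, norm_inv, norm_norm, ← hrdef]
    field_simp
  set w₀ : EuclideanSpace ℝ (Fin (n+2)) := EuclideanSpace.single 0 (1:ℝ) with hw₀
  have hw₀norm : ‖w₀‖ = 1 := by simp [hw₀, EuclideanSpace.norm_single]
  set e := (Submodule.reflection (ℝ ∙ (w₀ - u))ᗮ) with he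
  have hew : e w₀ = u := Submodule.reflection_sub (by rw [hw₀norm, hunorm])
  set S := {y : EuclideanSpace ℝ (Fin (n+2)) | ‖y - x₁‖ ^ p - ‖y - x₂‖ ^ p = c} with hS
  have hSm : MeasurableSet S := by
    exact (isClosed_eq (((cont_rpow_norm p hp x₁).sub (cont_rpow_norm p hp x₂)))
      continuous_const).measurableSet
  set T : EuclideanSpace ℝ (Fin (n+2)) → EuclideanSpace ℝ (Fin (n+2)) :=
    fun z => e z + x₁ with hT
  have hTmp : MeasurePreserving T volume volume :=
    (measurePreserving_add_right volume x₁).comp e.measurePreserving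
  set S' := {z : EuclideanSpace ℝ (Fin (n+2)) | ‖z‖ ^ p - ‖z - r • w₀‖ ^ p = c} with hS'
  have hpre : T ⁻¹' S = S' := by
    ext z
    simp only [hT, hS, hS', Set.mem_preimage, Set.mem_setOf_eq]
    have h1 : e z + x₁ - x₁ = e z := add_sub_cancel_right _ _
    have h2 : e z + x₁ - x₂ = e (z - r • w₀) := by
      have h3 : e (z - r • w₀) = e z - r • u := by
        rw [map_sub, _root_.map_smul, hew]
      rw [h3, hu, smul_smul, mul_inv_cancel₀ (ne_of_gt hr), one_smul, hv]
      abel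
    rw [h1, h2, e.norm_map, e.norm_map]
  have hkey : volume S' = 0 → volume S = 0 := by
    intro h
    have := hTmp.measure_preimage hSm.nullMeasurableSet
    rw [hpre, h] at this
    exact this.symm
  apply hkey
  -- now the slicing argument
  have hS'm : MeasurableSet S' := by
    exact (isClosed_eq ((((continuous_norm).rpow_const (fun y => Or.inr (le_trans zero_le_one hp))).sub
      (cont_rpow_norm p hp (r • w₀)))) continuous_const).measurableSet
  set φ : EuclideanSpace ℝ (Fin (n+2)) ≃ᵐ ℝ × (Fin (n+1) → ℝ) :=
    (MeasurableEquiv.toLp 2 (Fin (n+2) → ℝ)).symm.trans (MeasurableEquiv.piFinSuccAbove (fun _ => ℝ) 0) with hφdef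
  have hφ : MeasurePreserving φ volume volume :=
    (volume_preserving_piFinSuccAbove (fun _ => ℝ) 0).comp
      (EuclideanSpace.volume_preserving_symm_measurableEquiv_toLp _)
  have hφs : MeasurePreserving φ.symm volume volume := hφ.symm _
  have hvol : volume S' = volume (φ.symm ⁻¹' S') :=
    (hφs.measure_preimage hS'm.nullMeasurableSet).symm
  rw [hvol]
  have hA : MeasurableSet (φ.symm ⁻¹' S') := φ.symm.measurable hS'm
  have : (volume : Measure (ℝ × (Fin (n+1) → ℝ))) = volume.prod volume := rfl
  rw [show (volume : Measure (ℝ × (Fin (n+1) → ℝ))) = (volume : Measure ℝ).prod volume from rfl,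
    Measure.prod_apply_symm hA]
  have h0 : volume ({(0 : Fin (n+1) → ℝ)} : Set (Fin (n+1) → ℝ)) = 0 := by
    rw [← Set.univ_pi_singleton (0 : Fin (n+1) → ℝ)]
    rw [volume_pi_pi]
    exact Finset.prod_eq_zero (Finset.mem_univ 0) (by simp)
  have hae : ∀ᵐ w : Fin (n+1) → ℝ, w ≠ 0 := by
    rw [ae_iff]
    convert h0 using 2
    ext w
    simp
  have hslice : ∀ w : Fin (n+1) → ℝ, w ≠ 0 →
      volume ((fun t => (t, w)) ⁻¹' (φ.symm ⁻¹' S')) = 0 := by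
    intro w hw
    set s2 := ∑ j, (w j)^2 with hs2
    have hs2pos : 0 < s2 := by
      obtain ⟨j, hj⟩ := Function.ne_iff.mp hw
      exact Finset.sum_pos' (fun j _ => sq_nonneg _)
        ⟨j, Finset.mem_univ j, lt_of_le_of_ne (sq_nonneg _) (Ne.symm (pow_ne_zero 2 hj))⟩
    have hmem : ∀ t : ℝ, ((t, w) ∈ (φ.symm ⁻¹' S')) ↔
        (t^2 + s2)^(p/2) - ((t - r)^2 + s2)^(p/2) = c := by
      intro t
      set z : EuclideanSpace ℝ (Fin (n+2)) := φ.symm (t, w) with hz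
      have hzc0 : ∀ i : Fin (n+2), z i = (Fin.insertNth 0 t w : ∀ _ : Fin (n+2), ℝ) i :=
        fun i => rfl
      have hzc : ∀ i : Fin (n+2), z i = (Fin.cons t w : ∀ _ : Fin (n+2), ℝ) i := by
        intro i
        rw [hzc0 i, Fin.insertNth_zero']
      have hz0 : z 0 = t := (hzc 0).trans (Fin.cons_zero _ _)
      have hzs : ∀ j : Fin (n+1), z j.succ = w j := fun j => (hzc j.succ).trans (Fin.cons_succ _ _ _)
      have hsum1 : ∑ i : Fin (n+2), z i ^ 2 = t^2 + s2 := by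
        rw [Fin.sum_univ_succ, hz0, hs2]
        congr 1
      have hrw : ∀ x : ℝ, 0 ≤ x → Real.sqrt x ^ p = x ^ (p/2) := by
        intro x hx
        rw [Real.sqrt_eq_rpow, ← Real.rpow_mul hx]
        congr 1
        ring
      have hnorm1 : ‖z‖ ^ p = (t^2 + s2)^(p/2) := by
        rw [EuclideanSpace.norm_eq]
        simp only [Real.norm_eq_abs, sq_abs]
        rw [hsum1, hrw _ (by positivity)]
      have hzw : ∀ i : Fin (n+2), (z - r • w₀) i = (Fin.cons (t - r) w : ∀ _ : Fin (n+2), ℝ) i := by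
        intro i
        have : (z - r • w₀) i = z i - r * (EuclideanSpace.single 0 (1:ℝ)) i := by
          simp [hw₀]
        rw [this, hzc i]
        rcases Fin.eq_zero_or_eq_succ i with rfl | ⟨j, rfl⟩
        · simp [EuclideanSpace.single_apply]
        · simp [EuclideanSpace.single_apply, Fin.succ_ne_zero]
      have hsum2 : ∑ i : Fin (n+2), (z - r • w₀) i ^ 2 = (t - r)^2 + s2 := by
        rw [Fin.sum_univ_succ]
        congr 1
        · rw [hzw 0]; rfl
        · exact Finset.sum_congr rfl fun j _ => by rw [hzw j.succ]; simp
      have hnorm2 : ‖z - r • w₀‖ ^ p = ((t - r)^2 + s2)^(p/2) := by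
        rw [EuclideanSpace.norm_eq]
        simp only [Real.norm_eq_abs, sq_abs]
        rw [hsum2, hrw _ (by positivity)]
      show z ∈ S' ↔ _
      rw [hS', Set.mem_setOf_eq, hnorm1, hnorm2]
    have hset : ((fun t => (t, w)) ⁻¹' (φ.symm ⁻¹' S')) =
        {t : ℝ | (t^2 + s2)^(p/2) - ((t - r)^2 + s2)^(p/2) = c} := by
      ext t
      exact hmem t
    rw [hset]
    have hsub : ({t : ℝ | (t^2 + s2)^(p/2) - ((t - r)^2 + s2)^(p/2) = c}).Subsingleton :=
      fun t1 h1 t2 h2 => (aux_strictMono p r s2 hp hr hs2pos).injective (h1.trans h2.symm)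
    exact hsub.measure_zero volume
  have : (fun w : Fin (n+1) → ℝ => volume ((fun t => (t, w)) ⁻¹' (φ.symm ⁻¹' S')))
      =ᵐ[volume] (fun _ => 0) := by
    filter_upwards [hae] with w hw
    exact hslice w hw
  rw [lintegral_congr_ae this, lintegral_zero]
  

/-- Dual formula for f and attainment by the power diagram.
f(a) = ∫_Ω min_i (|x - x_i|^p - a_i) dx + Σ_i m_i a_i, and the infimum over
partitions is attained by the p-power diagram with weights a_i (which is a
partition of Ω up to null sets). -/
theorem dual_objective_formula_and_attainment
    {d M : ℕ} (hd : 2 ≤ d) (hM : 0 < M) (p : ℝ) (hp : 1 ≤ p)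
    (Ω : Set (EuclideanSpace ℝ (Fin d))) (hΩm : MeasurableSet Ω)
    (hΩb : Bornology.IsBounded Ω) (hΩpos : 0 < volume Ω)
    (x : Fin M → EuclideanSpace ℝ (Fin d)) (hx : Function.Injective x)
    (hxΩ : ∀ i, x i ∈ Ω)
    (m : Fin M → ℝ) (hm : ∀ i, 0 < m i) (hmsum : ∑ i, m i = (volume Ω).toReal)
    (f : (Fin M → ℝ) → ℝ)
    (hf : ∀ a, f a = sInf {c : ℝ | ∃ S : Fin M → Set (EuclideanSpace ℝ (Fin d)),
        (∀ i, MeasurableSet (S i)) ∧ (⋃ i, S i) = Ω ∧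
        (∀ i j, i ≠ j → volume (S i ∩ S j) = 0) ∧
        c = (∑ i, ∫ y in S i, (‖y - x i‖ ^ p - a i)) + ∑ i, m i * a i})
    (a : Fin M → ℝ)
    (P : Fin M → Set (EuclideanSpace ℝ (Fin d)))
    (hP : ∀ i, P i = {y ∈ Ω | ∀ j, ‖y - x i‖ ^ p - a i ≤ ‖y - x j‖ ^ p - a j}) :
    f a = (∫ y in Ω,
        (Finset.univ.inf' ⟨⟨0, hM⟩, Finset.mem_univ _⟩
          fun i => ‖y - x i‖ ^ p - a i)) + ∑ i, m i * a i ∧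
    (⋃ i, P i) = Ω ∧
    (∀ i j, i ≠ j → volume (P i ∩ P j) = 0) ∧
    (∑ i, ∫ y in P i, (‖y - x i‖ ^ p - a i)) + ∑ i, m i * a i = f a := by
  obtain ⟨n, rfl⟩ : ∃ n, d = n + 2 := ⟨d - 2, by omega⟩
  have hE : True := trivial
  have hne : (Finset.univ : Finset (Fin M)).Nonempty := ⟨⟨0, hM⟩, Finset.mem_univ _⟩
  set g : EuclideanSpace ℝ (Fin (n+2)) → ℝ := fun y => Finset.univ.inf' hne fun i => ‖y - x i‖ ^ p - a i with hg
  have ncont : ∀ i, Continuous (fun y : EuclideanSpace ℝ (Fin (n+2)) => ‖y - x i‖ ^ p - a i) :=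
    fun i => (cont_rpow_norm p hp (x i)).sub continuous_const
  have gcont : Continuous g :=
    Continuous.finset_inf'_apply hne (fun i _ => ncont i)
  have hcl : IsCompact (closure Ω) := hΩb.isCompact_closure
  have nInt : ∀ i, IntegrableOn (fun y : EuclideanSpace ℝ (Fin (n+2)) => ‖y - x i‖ ^ p - a i) Ω :=
    fun i => ((ncont i).continuousOn.integrableOn_compact hcl).mono_set subset_closure
  have gInt : IntegrableOn g Ω :=
    (gcont.continuousOn.integrableOn_compact hcl).mono_set subset_closure
  -- P properties
  have hPm : ∀ i, MeasurableSet (P i) := by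
    intro i
    have hPi : P i = Ω ∩ ⋂ j, {y : EuclideanSpace ℝ (Fin (n+2)) | ‖y - x i‖ ^ p - a i ≤ ‖y - x j‖ ^ p - a j} := by
      rw [hP i]; ext y; simp [Set.mem_iInter]
    rw [hPi]
    exact hΩm.inter (MeasurableSet.iInter fun j =>
      (isClosed_le (ncont i) (ncont j)).measurableSet)
  have hPsub : ∀ i, P i ⊆ Ω := by
    intro i y hy
    rw [hP i] at hy
    exact hy.1
  have hPunion : (⋃ i, P i) = Ω := by
    apply subset_antisymm (Set.iUnion_subset hPsub)
    intro y hy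
    obtain ⟨i, -, hi⟩ := Finset.exists_min_image Finset.univ
      (fun i => ‖y - x i‖ ^ p - a i) hne
    exact Set.mem_iUnion.mpr ⟨i, by
      rw [hP i]; exact ⟨hy, fun j => hi j (Finset.mem_univ j)⟩⟩
  have hPdisj : ∀ i j, i ≠ j → volume (P i ∩ P j) = 0 := by
    intro i j hij
    apply measure_mono_null _ (level_null p hp (x i) (x j) (fun h => hij (hx h)) (a i - a j))
    intro y hy
    obtain ⟨hyi, hyj⟩ := hy
    rw [hP i] at hyi; rw [hP j] at hyj
    have h1 := hyi.2 j
    have h2 := hyj.2 i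
    show ‖y - x i‖ ^ p - ‖y - x j‖ ^ p = a i - a j
    linarith
  -- splitting the integral over an a.e.-partition
  have hsplit : ∀ S : Fin M → Set (EuclideanSpace ℝ (Fin (n+2))), (∀ i, MeasurableSet (S i)) → (⋃ i, S i) = Ω →
      (∀ i j, i ≠ j → volume (S i ∩ S j) = 0) →
      ∑ i, ∫ y in S i, g y = ∫ y in Ω, g y := by
    intro S hSm hSu hSd
    have hInt : IntegrableOn g (⋃ i, S i) := hSu ▸ gInt
    rw [← hSu, integral_iUnion_ae (fun i => (hSm i).nullMeasurableSet)
      (fun i j hij => hSd i j hij) hInt]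
    exact (tsum_fintype _).symm
  -- value of the objective at P
  have hPint : ∀ i, ∫ y in P i, (‖y - x i‖ ^ p - a i) = ∫ y in P i, g y := by
    intro i
    apply setIntegral_congr_fun (hPm i)
    intro y hy
    have hy' := hy
    rw [hP i] at hy'
    show ‖y - x i‖ ^ p - a i = g y
    exact le_antisymm (Finset.le_inf' hne _ fun j _ => hy'.2 j)
      (Finset.inf'_le _ (Finset.mem_univ i))
  have hPval : (∑ i, ∫ y in P i, (‖y - x i‖ ^ p - a i)) = ∫ y in Ω, g y := by
    rw [Finset.sum_congr rfl fun i _ => hPint i]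
    exact hsplit P hPm hPunion hPdisj
  -- lower bound
  have hlb : ∀ b ∈ {c : ℝ | ∃ S : Fin M → Set (EuclideanSpace ℝ (Fin (n+2))),
      (∀ i, MeasurableSet (S i)) ∧ (⋃ i, S i) = Ω ∧
      (∀ i j, i ≠ j → volume (S i ∩ S j) = 0) ∧
      c = (∑ i, ∫ y in S i, (‖y - x i‖ ^ p - a i)) + ∑ i, m i * a i},
      (∫ y in Ω, g y) + ∑ i, m i * a i ≤ b := by
    rintro b ⟨S, hSm, hSu, hSd, rfl⟩
    have hSsub : ∀ i, S i ⊆ Ω := fun i => hSu ▸ Set.subset_iUnion S i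
    have h1 : ∀ i, ∫ y in S i, g y ≤ ∫ y in S i, (‖y - x i‖ ^ p - a i) := by
      intro i
      exact setIntegral_mono_on (gInt.mono_set (hSsub i)) ((nInt i).mono_set (hSsub i))
        (hSm i) (fun y _ => Finset.inf'_le _ (Finset.mem_univ i))
    have h2 : ∫ y in Ω, g y ≤ ∑ i, ∫ y in S i, (‖y - x i‖ ^ p - a i) := by
      rw [← hsplit S hSm hSu hSd]
      exact Finset.sum_le_sum fun i _ => h1 i
    linarith
  have hPmem : ((∑ i, ∫ y in P i, (‖y - x i‖ ^ p - a i)) + ∑ i, m i * a i) ∈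
      {c : ℝ | ∃ S : Fin M → Set (EuclideanSpace ℝ (Fin (n+2))),
      (∀ i, MeasurableSet (S i)) ∧ (⋃ i, S i) = Ω ∧
      (∀ i j, i ≠ j → volume (S i ∩ S j) = 0) ∧
      c = (∑ i, ∫ y in S i, (‖y - x i‖ ^ p - a i)) + ∑ i, m i * a i} :=
    ⟨P, hPm, hPunion, hPdisj, rfl⟩
  have hfa : f a = (∫ y in Ω, g y) + ∑ i, m i * a i := by
    rw [hf a]
    apply le_antisymm
    · have := csInf_le ⟨_, hlb⟩ hPmem
      calc sInf _ ≤ (∑ i, ∫ y in P i, (‖y - x i‖ ^ p - a i)) + ∑ i, m i * a i := this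
        _ = (∫ y in Ω, g y) + ∑ i, m i * a i := by rw [hPval]
    · exact le_csInf ⟨_, hPmem⟩ hlb
  refine ⟨hfa, hPunion, hPdisj, ?_⟩
  rw [hPval, hfa]
end
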